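/- Let f be a ceded loss function (f and x ↦ x - f(x) increasing, 0 ≤ f(x) ≤ x), X a nonnegative integrable random variable, α ∈ (0,1], and define the layer function h(x) = min{(x - (VaR_α(X) - f(VaR_α(X))))₊, f(VaR_α(X))}. Then h(x) ≤ f(x) for all x ≥ 0, and VaR_α(X - h(X)) = VaR_α(X - f(X)). -/

import Mathlib

open MeasureTheory ProbabilityTheory Set

noncomputable section

variable {Ω Ω' : Type*} [MeasurableSpace Ω] [MeasurableSpace Ω']

/-- Distribution function of a random variable. -/
def distFun (μ : Measure Ω) (X : Ω → ℝ) (x : ℝ) : ℝ := (μ {ω | X ω ≤ x}).toReal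

/-- Value-at-Risk at level α: `VaR_α(X) = inf {x | F_X(x) ≥ 1-α}`. -/
def VaR (μ : Measure Ω) (X : Ω → ℝ) (α : ℝ) : ℝ := sInf {x | 1 - α ≤ distFun μ X x}

/-- Range-Value-at-Risk with parameters α, β (for β > 0). -/
def RVaR (μ : Measure Ω) (X : Ω → ℝ) (α β : ℝ) : ℝ := (1/β) * ∫ s in α..(α+β), VaR μ X s

/-- Usual stochastic order. -/
def le_st (μ : Measure Ω) (X : Ω → ℝ) (ν : Measure Ω') (Y : Ω' → ℝ) : Prop :=
  ∀ f : ℝ → ℝ, Monotone f → Integrable (fun ω => f (X ω)) μ →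
    Integrable (fun ω => f (Y ω)) ν → ∫ ω, f (X ω) ∂μ ≤ ∫ ω, f (Y ω) ∂ν

/-- Convex order. -/
def le_cx (μ : Measure Ω) (X : Ω → ℝ) (ν : Measure Ω') (Y : Ω' → ℝ) : Prop :=
  ∀ f : ℝ → ℝ, ConvexOn ℝ univ f → Integrable (fun ω => f (X ω)) μ →
    Integrable (fun ω => f (Y ω)) ν → ∫ ω, f (X ω) ∂μ ≤ ∫ ω, f (Y ω) ∂ν

/-- Increasing convex order. -/
def le_icx (μ : Measure Ω) (X : Ω → ℝ) (ν : Measure Ω') (Y : Ω' → ℝ) : Prop :=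
  ∀ f : ℝ → ℝ, Monotone f → ConvexOn ℝ univ f → Integrable (fun ω => f (X ω)) μ →
    Integrable (fun ω => f (Y ω)) ν → ∫ ω, f (X ω) ∂μ ≤ ∫ ω, f (Y ω) ∂ν

/-- Admissible ceded loss functions: `0 ≤ f(x) ≤ x` with both `f` and the
retained loss `x - f(x)` increasing. -/
def Ceded (f : ℝ → ℝ) : Prop :=
  Monotone f ∧ Monotone (fun x => x - f x) ∧ ∀ x, 0 ≤ x → 0 ≤ f x ∧ f x ≤ x

/-- Layer reinsurance treaty with deductible `a` and upper bound `b`. -/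
def layer (a b x : ℝ) : ℝ := min (max (x - a) 0) b

/-- Joint distribution function of a random vector. -/
def jointCDF {n : ℕ} (μ : Measure Ω) (X : Fin n → Ω → ℝ) (x : Fin n → ℝ) : ℝ :=
  (μ {ω | ∀ i, X i ω ≤ x i}).toReal

/-- All one-dimensional marginals are uniform on [0,1]. -/
def uniformMarginals {n : ℕ} (ν : Measure (Fin n → ℝ)) : Prop :=
  ∀ i, Measure.map (fun u => u i) ν = volume.restrict (Icc (0:ℝ) 1)

/-- `C` is (the distribution function of) an `n`-dimensional copula. -/
def IsCopula {n : ℕ} (C : (Fin n → ℝ) → ℝ) : Prop :=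
  ∃ ν : Measure (Fin n → ℝ), IsProbabilityMeasure ν ∧ uniformMarginals ν ∧
    ∀ x, C x = (ν {u | ∀ i, u i ≤ x i}).toReal

/-- `C` is a copula of the random vector `X`. -/
def HasCopula {n : ℕ} (μ : Measure Ω) (X : Fin n → Ω → ℝ) (C : (Fin n → ℝ) → ℝ) : Prop :=
  IsCopula C ∧ ∀ x : Fin n → ℝ, jointCDF μ X x = C (fun i => distFun μ (X i) (x i))

/-- Positively dependent through the stochastic ordering: for each `i`,
`E[f(X_{-i}) | X_i = x]` is increasing in `x` for every componentwise increasing `f`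
(not depending on coordinate `i`). -/
def PDS {n : ℕ} (μ : Measure Ω) (X : Fin n → Ω → ℝ) : Prop :=
  ∀ i : Fin n, ∀ f : (Fin n → ℝ) → ℝ, Monotone f →
    (∀ a b : Fin n → ℝ, (∀ j, j ≠ i → a j = b j) → f a = f b) →
    ∃ g : ℝ → ℝ, Monotone g ∧
      (μ[(fun ω => f (fun j => X j ω)) | MeasurableSpace.comap (X i) (borel ℝ)]
        =ᵐ[μ] fun ω => g (X i ω))

/-- `C` is a PDS copula. -/
def IsPDSCopula {n : ℕ} (C : (Fin n → ℝ) → ℝ) : Prop :=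
  ∃ ν : Measure (Fin n → ℝ), IsProbabilityMeasure ν ∧ uniformMarginals ν ∧
    (∀ x, C x = (ν {u | ∀ i, u i ≤ x i}).toReal) ∧ PDS ν (fun i u => u i)

/-- Positive orthant dependence. -/
def POD {n : ℕ} (μ : Measure Ω) (X : Fin n → Ω → ℝ) : Prop :=
  ∀ x : Fin n → ℝ,
    (∏ i, (μ {ω | X i ω ≤ x i}).toReal) ≤ (μ {ω | ∀ i, X i ω ≤ x i}).toReal ∧
    (∏ i, (μ {ω | x i < X i ω}).toReal) ≤ (μ {ω | ∀ i, x i < X i ω}).toReal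

/-- A comonotone random vector. -/
def Comonotone {m : ℕ} (Z : Fin m → Ω → ℝ) : Prop :=
  ∀ i j ω ω', 0 ≤ (Z i ω - Z i ω') * (Z j ω - Z j ω')

open Filter Topology in
/-- Auxiliary: `VaR` is nonnegative for nonnegative `X`, and commutes with monotone
continuous transformations (for `α < 1`). -/
private lemma VaR_comp_helper (μ : Measure Ω) [IsProbabilityMeasure μ] (X : Ω → ℝ)
    (hXm : Measurable X) (hX0 : ∀ ω, 0 ≤ X ω) {α : ℝ} (hα0 : 0 < α) (hα1 : α < 1) :
    (0 ≤ VaR μ X α) ∧ ∀ t : ℝ → ℝ, Monotone t → Continuous t →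
      VaR μ (fun ω => t (X ω)) α = t (VaR μ X α) := by
  set S : Set ℝ := {x | 1 - α ≤ distFun μ X x} with hS
  have hFmono : Monotone (distFun μ X) := fun x y hxy =>
    ENNReal.toReal_mono (measure_ne_top μ _) (measure_mono fun ω (h : X ω ≤ x) => h.trans hxy)
  have hSne : S.Nonempty := by
    have hmono : Monotone fun n : ℕ => {ω | X ω ≤ (n : ℝ)} := by
      intro n k hnk ω h
      simp only [Set.mem_setOf_eq] at h ⊢
      exact le_trans h (Nat.cast_le.2 hnk)
    have hU : (⋃ n : ℕ, {ω | X ω ≤ (n : ℝ)}) = Set.univ := by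
      ext ω
      simp only [Set.mem_iUnion, Set.mem_univ, iff_true, Set.mem_setOf_eq]
      exact exists_nat_ge (X ω)
    have h1 : Tendsto (fun n : ℕ => μ {ω | X ω ≤ (n : ℝ)}) atTop (𝓝 1) := by
      have := tendsto_measure_iUnion_atTop (μ := μ) hmono
      rw [hU, measure_univ] at this
      exact this
    have h2 : Tendsto (fun n : ℕ => distFun μ X n) atTop (𝓝 1) := by
      have := (ENNReal.tendsto_toReal (by norm_num : (1 : ENNReal) ≠ ⊤)).comp h1
      simpa [distFun, Function.comp_def] using this
    obtain ⟨n, hn⟩ := (h2.eventually (lt_mem_nhds (by linarith : 1 - α < 1))).exists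
    exact ⟨n, hn.le⟩
  have hSbd : ∀ y ∈ S, (0 : ℝ) ≤ y := by
    intro y hy
    by_contra hneg
    push_neg at hneg
    have hempty : {ω | X ω ≤ y} = (∅ : Set Ω) := by
      ext ω
      simp only [Set.mem_setOf_eq, Set.mem_empty_iff_false, iff_false, not_le]
      exact lt_of_lt_of_le hneg (hX0 ω)
    have hF : distFun μ X y = 0 := by simp [distFun, hempty]
    rw [hS] at hy
    simp only [Set.mem_setOf_eq, hF] at hy
    linarith
  have hSbdd : BddBelow S := ⟨0, hSbd⟩
  have hmdef : VaR μ X α = sInf S := rfl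
  set m := sInf S with hm
  have hm0 : 0 ≤ m := le_csInf hSne hSbd
  -- right-continuity of the distribution function: `m ∈ S`
  have hmS : 1 - α ≤ distFun μ X m := by
    set A : ℕ → Set Ω := fun n => {ω | X ω ≤ m + 1 / (n + 1)} with hA
    have hAanti : Antitone A := by
      intro n k hnk ω h
      refine le_trans (show X ω ≤ m + 1 / ((k : ℝ) + 1) from h) (add_le_add le_rfl ?_)
      have h1 : (0 : ℝ) < n + 1 := by positivity
      have h2 : (n : ℝ) + 1 ≤ (k : ℝ) + 1 := by exact_mod_cast Nat.succ_le_succ hnk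
      exact one_div_le_one_div_of_le h1 h2
    have hAint : (⋂ n, A n) = {ω | X ω ≤ m} := by
      ext ω
      simp only [Set.mem_iInter, hA, Set.mem_setOf_eq]
      constructor
      · intro h
        by_contra hc
        push_neg at hc
        obtain ⟨n, hn⟩ := exists_nat_one_div_lt (show (0 : ℝ) < X ω - m by linarith)
        exact absurd (h n) (by push_neg; linarith)
      · intro h n
        have : (0 : ℝ) < 1 / (n + 1) := by positivity
        linarith
    have hlim : Tendsto (fun n => μ (A n)) atTop (𝓝 (μ (⋂ n, A n))) :=
      tendsto_measure_iInter_atTop (μ := μ)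
        (fun n => (hXm measurableSet_Iic).nullMeasurableSet) hAanti ⟨0, measure_ne_top μ _⟩
    rw [hAint] at hlim
    have hlim2 : Tendsto (fun n : ℕ => distFun μ X (m + 1 / (n + 1))) atTop
        (𝓝 (distFun μ X m)) := by
      have := (ENNReal.tendsto_toReal (measure_ne_top μ _)).comp hlim
      simpa [distFun, Function.comp_def, hA] using this
    refine ge_of_tendsto' hlim2 fun n => ?_
    have hlt : sInf S < m + 1 / (n + 1) := by
      rw [← hm]
      have : (0 : ℝ) < 1 / (n + 1 : ℝ) := by positivity
      linarith
    obtain ⟨s, hsS, hs⟩ := (csInf_lt_iff hSbdd hSne).1 hlt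
    exact le_trans hsS (hFmono hs.le)
  refine ⟨hm0, ?_⟩
  intro t ht htc
  set T : Set ℝ := {y | 1 - α ≤ distFun μ (fun ω => t (X ω)) y} with hT
  have htmT : t m ∈ T := by
    rw [hT]
    refine le_trans hmS (ENNReal.toReal_mono (measure_ne_top μ _) (measure_mono ?_))
    exact fun ω (h : X ω ≤ m) => ht h
  have hTbd : ∀ y ∈ T, t 0 ≤ y := by
    intro y hy
    by_contra hneg
    push_neg at hneg
    have hempty : {ω | t (X ω) ≤ y} = (∅ : Set Ω) := by
      ext ω
      simp only [Set.mem_setOf_eq, Set.mem_empty_iff_false, iff_false, not_le]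
      exact lt_of_lt_of_le hneg (ht (hX0 ω))
    rw [hT] at hy
    simp only [Set.mem_setOf_eq, distFun, hempty, measure_empty, ENNReal.toReal_zero] at hy
    linarith
  have hub : sInf T ≤ t m := csInf_le ⟨t 0, hTbd⟩ htmT
  have hlb : t m ≤ sInf T := by
    refine le_csInf ⟨t m, htmT⟩ fun y hy => ?_
    by_contra hlt
    push_neg at hlt
    set K : Set ℝ := {x | t x ≤ y} with hK
    have hKne : K.Nonempty := by
      by_contra hKe
      rw [Set.not_nonempty_iff_eq_empty] at hKe
      have hempty : {ω | t (X ω) ≤ y} = (∅ : Set Ω) := by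
        ext ω
        simp only [Set.mem_setOf_eq, Set.mem_empty_iff_false, iff_false]
        intro h
        have hmem : X ω ∈ K := h
        rw [hKe] at hmem
        exact hmem
      rw [hT] at hy
      simp only [Set.mem_setOf_eq, distFun, hempty, measure_empty, ENNReal.toReal_zero] at hy
      linarith
    have hKub : ∀ x ∈ K, x ≤ m := by
      intro x hx
      by_contra hxm
      push_neg at hxm
      exact absurd (le_trans (ht hxm.le) hx) (not_le.2 hlt)
    have hKbdd : BddAbove K := ⟨m, hKub⟩
    have htc2 : t (sSup K) ≤ y := by
      rw [Monotone.map_csSup_of_continuousAt htc.continuousAt ht hKne hKbdd]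
      exact csSup_le (hKne.image t) (by rintro _ ⟨x, hx, rfl⟩; exact hx)
    have hcm : sSup K < m := by
      rcases lt_or_eq_of_le (csSup_le hKne hKub) with h | h
      · exact h
      · exact absurd (h ▸ htc2) (not_le.2 hlt)
    have hcS : sSup K ∈ S := by
      rw [hS]
      refine le_trans hy (ENNReal.toReal_mono (measure_ne_top μ _) (measure_mono ?_))
      exact fun ω (h : t (X ω) ≤ y) => le_csSup hKbdd h
    exact absurd (csInf_le hSbdd hcS) (not_le.2 hcm)
  exact le_antisymm hub hlb

/-- the layer treaty `h` built from a ceded loss function `f` satisfies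
`h ≤ f` on ℝ≥0 and leaves the Value-at-Risk of the retained loss unchanged. -/
theorem layer_dominated_and_VaR_retained_eq
    (μ : Measure Ω) [IsProbabilityMeasure μ] (X : Ω → ℝ)
    (hXm : Measurable X) (hX0 : ∀ ω, 0 ≤ X ω) (hXi : Integrable X μ)
    (f : ℝ → ℝ) (hf : Ceded f) (α : ℝ) (hα : α ∈ Ioc (0:ℝ) 1) :
    (∀ x, 0 ≤ x →
      layer (VaR μ X α - f (VaR μ X α)) (f (VaR μ X α)) x ≤ f x) ∧
    VaR μ (fun ω => X ω - layer (VaR μ X α - f (VaR μ X α)) (f (VaR μ X α)) (X ω)) α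
      = VaR μ (fun ω => X ω - f (X ω)) α := by
  obtain ⟨hα0, hα1⟩ := hα
  set m := VaR μ X α with hmdef
  set a := m - f m with hadef
  set b := f m with hbdef
  constructor
  · intro x hx
    by_cases hxm : x ≤ m
    · refine le_trans (min_le_left _ _) (max_le ?_ (hf.2.2 x hx).1)
      have h2 : x - f x ≤ m - f m := hf.2.1 hxm
      rw [hadef]; linarith
    · push_neg at hxm
      exact le_trans (min_le_right _ _) (hbdef ▸ hf.1 hxm.le)
  · rcases eq_or_lt_of_le hα1 with h1 | h1
    · -- case α = 1 : both sides are `sInf univ = 0`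
      have hz : ∀ Y : Ω → ℝ, VaR μ Y α = 0 := by
        intro Y
        have huniv : {x | 1 - α ≤ distFun μ Y x} = Set.univ := by
          ext x
          simp only [Set.mem_setOf_eq, Set.mem_univ, iff_true, ← h1, sub_self]
          exact ENNReal.toReal_nonneg
        have : VaR μ Y α = sInf (Set.univ : Set ℝ) := by rw [VaR, huniv]
        rw [this, csInf_of_not_bddBelow, Real.sInf_empty]
        rintro ⟨z, hz⟩
        have h := hz (Set.mem_univ (z - 1))
        linarith
      rw [hz, hz]
    · obtain ⟨hm0, hkey⟩ := VaR_comp_helper μ X hXm hX0 hα0 h1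
      rw [← hmdef] at hm0 hkey
      have hfm0 : 0 ≤ f m := (hf.2.2 m hm0).1
      -- continuity of f (it is 1-Lipschitz)
      have hfc : Continuous f := by
        have : LipschitzWith 1 f := LipschitzWith.of_dist_le_mul fun x y => by
          simp only [Real.dist_eq, NNReal.coe_one, one_mul]
          rcases le_total x y with h | h
          · have h2 : x - f x ≤ y - f y := hf.2.1 h
            have h3 : f x ≤ f y := hf.1 h
            rw [abs_of_nonpos (by linarith), abs_of_nonpos (by linarith)]
            linarith
          · have h2 : y - f y ≤ x - f x := hf.2.1 h
            have h3 : f y ≤ f x := hf.1 h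
            rw [abs_of_nonneg (by linarith), abs_of_nonneg (by linarith)]
            linarith
        exact this.continuous
      have mono1 : Monotone fun x => x - layer a b x := by
        intro x y hxy
        simp only [layer]
        have h1 : max (y - a) 0 ≤ max (x - a) 0 + (y - x) := by
          refine max_le ?_ ?_
          · have := le_max_left (x - a) (0 : ℝ); linarith
          · have := le_max_right (x - a) (0 : ℝ); linarith
        have h2 : min (max (y - a) 0) b ≤ min (max (x - a) 0) b + (y - x) := by
          rcases min_cases (max (x - a) 0) b with ⟨heq, _⟩ | ⟨heq, hle⟩ <;> rw [heq]
          · have := min_le_left (max (y - a) 0) b; linarith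
          · have := min_le_right (max (y - a) 0) b; linarith
        linarith
      have cont1 : Continuous fun x => x - layer a b x := by
        have : Continuous fun x => layer a b x :=
          ((continuous_id.sub continuous_const).max continuous_const).min continuous_const
        exact continuous_id.sub this
      have h1' : VaR μ (fun ω => X ω - layer a b (X ω)) α = m - layer a b m :=
        hkey (fun x => x - layer a b x) mono1 cont1
      have h2' : VaR μ (fun ω => X ω - f (X ω)) α = m - f m :=
        hkey (fun x => x - f x) hf.2.1 (continuous_id.sub hfc)
      rw [h1', h2']
      have : layer a b m = f m := by
        rw [layer, hadef, hbdef, sub_sub_cancel, max_eq_left hfm0, min_self]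
      rw [this]
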